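/- The 12x6 matrix M with rows indexed by the conditions d_{ij} f_j^{ll} = d_{ik} f_k^{ll} (for the tetrahedron degree-0 deformation computation), with entries ± f_α^{ββ} as displayed, has the property that the product f_j^{kk} f_k^{ll} f_l^{jj} · (f_k^{jj} f_l^{kk} f_j^{ll} - f_j^{kk} f_k^{ll} f_l^{jj}) lies in the ideal generated by the 6x6 minors of M; in particular, if M has a nontrivial kernel and all f_i^{jj} are nonzero, then f_k^{jj} f_l^{kk} f_j^{ll} = f_j^{kk} f_k^{ll} f_l^{jj}. -/

import Mathlib

set_option maxRecDepth 8000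
set_option maxHeartbeats 1600000

/-- The `12 × 6` coefficient matrix of the linear system for the unknowns
`d_{ij}` in the degree-0 deformation computation for the tetrahedron, with
entries `± f_a^{bb}` (written `f a b`) and `(i,j,k,l) = (1,2,3,4)` realised as
`(0,1,2,3) : Fin 4`.  Some `6 × 6` minor equals (up to sign)
`f_j^{kk} f_k^{ll} f_l^{jj} (f_k^{jj} f_l^{kk} f_j^{ll} - f_j^{kk} f_k^{ll} f_l^{jj})`,
so this product lies in the ideal of `6 × 6` minors; in particular, if the
system has a nontrivial solution and all `f a b` are nonzero, then the
`d`-semistability equation `f_k^{jj} f_l^{kk} f_j^{ll} = f_j^{kk} f_k^{ll} f_l^{jj}`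
holds. -/
theorem tetrahedron_minor_and_dSemistability (K : Type*) [Field K]
    (f : Fin 4 → Fin 4 → K)
    (M : Matrix (Fin 12) (Fin 6) K)
    (hM : M = !![0, f 2 1, -f 3 1, 0, 0, 0;
                 -f 1 2, 0, f 3 2, 0, 0, 0;
                 f 1 3, -f 2 3, 0, 0, 0, 0;
                 f 0 2, 0, 0, 0, -f 3 2, 0;
                 -f 0 3, 0, 0, f 2 3, 0, 0;
                 0, 0, 0, -f 2 0, f 3 0, 0;
                 0, f 0 3, 0, -f 1 3, 0, 0;
                 0, -f 0 1, 0, 0, 0, f 3 1;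
                 0, 0, 0, f 1 0, 0, -f 3 0;
                 0, 0, f 0 1, 0, 0, -f 2 1;
                 0, 0, -f 0 2, 0, f 1 2, 0;
                 0, 0, 0, 0, -f 1 0, f 2 0]) :
    (∃ r : Fin 6 → Fin 12, Function.Injective r ∧
      ((M.submatrix r id).det =
          f 1 2 * f 2 3 * f 3 1 * (f 2 1 * f 3 2 * f 1 3 - f 1 2 * f 2 3 * f 3 1) ∨
        (M.submatrix r id).det =
          -(f 1 2 * f 2 3 * f 3 1 * (f 2 1 * f 3 2 * f 1 3 - f 1 2 * f 2 3 * f 3 1)))) ∧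
    ((∀ a b : Fin 4, a ≠ b → f a b ≠ 0) → (∃ v : Fin 6 → K, v ≠ 0 ∧ M.mulVec v = 0) →
      f 2 1 * f 3 2 * f 1 3 = f 1 2 * f 2 3 * f 3 1) := by
  subst hM
  set r : Fin 6 → Fin 12 := ![0, 1, 2, 4, 7, 10] with hr
  have hinj : Function.Injective r := by decide
  set N := (!![0, f 2 1, -f 3 1, 0, 0, 0;
                 -f 1 2, 0, f 3 2, 0, 0, 0;
                 f 1 3, -f 2 3, 0, 0, 0, 0;
                 f 0 2, 0, 0, 0, -f 3 2, 0;
                 -f 0 3, 0, 0, f 2 3, 0, 0;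
                 0, 0, 0, -f 2 0, f 3 0, 0;
                 0, f 0 3, 0, -f 1 3, 0, 0;
                 0, -f 0 1, 0, 0, 0, f 3 1;
                 0, 0, 0, f 1 0, 0, -f 3 0;
                 0, 0, f 0 1, 0, 0, -f 2 1;
                 0, 0, -f 0 2, 0, f 1 2, 0;
                 0, 0, 0, 0, -f 1 0, f 2 0] : Matrix (Fin 12) (Fin 6) K) with hN
  have hsub : N.submatrix r id =
      !![0, f 2 1, -f 3 1, 0, 0, 0;
         -f 1 2, 0, f 3 2, 0, 0, 0;
         f 1 3, -f 2 3, 0, 0, 0, 0;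
         -f 0 3, 0, 0, f 2 3, 0, 0;
         0, -f 0 1, 0, 0, 0, f 3 1;
         0, 0, -f 0 2, 0, f 1 2, 0] := by
    ext i j
    fin_cases i <;> fin_cases j <;> rfl
  have hdet : (N.submatrix r id).det =
      -(f 1 2 * f 2 3 * f 3 1 * (f 2 1 * f 3 2 * f 1 3 - f 1 2 * f 2 3 * f 3 1)) := by
    rw [hsub]
    simp [Matrix.det_succ_row_zero, Fin.sum_univ_succ, Fin.succAbove]
    ring
  refine ⟨⟨r, hinj, Or.inr hdet⟩, ?_⟩
  rintro hf ⟨v, hv, hMv⟩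
  have h0 : (N.submatrix r id).det = 0 := by
    apply Matrix.exists_mulVec_eq_zero_iff.mp
    refine ⟨v, hv, ?_⟩
    funext i
    have := congrFun hMv (r i)
    simpa [Matrix.mulVec, dotProduct] using this
  rw [hdet] at h0
  have h1 : f 1 2 * f 2 3 * f 3 1 ≠ 0 := by
    exact mul_ne_zero (mul_ne_zero (hf 1 2 (by decide)) (hf 2 3 (by decide))) (hf 3 1 (by decide))
  have := neg_eq_zero.mp h0
  rcases mul_eq_zero.mp this with h | h
  · exact absurd h h1
  · exact sub_eq_zero.mp h
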